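/- Let h > 0, n > 0, κ_m > 0, |κ_cm| < κ_m, and T_c > T_m. Then the polynomial temperature profile T(z) = T_m + (T_c − T_m)η(z), with η as defined, is strictly increasing on [−h/2, h/2]; in particular T_m ≤ T(z) ≤ T_c for all z ∈ [−h/2, h/2]. -/

import Mathlib

/-- The truncated polynomial temperature profile `T(z) = T_m + (T_c - T_m) η(z)` is
strictly increasing through the thickness when `T_c > T_m`; in particular
`T_m ≤ T(z) ≤ T_c` on `[-h/2, h/2]`. -/
theorem stmt_6 (h n κm κcm C Tm Tc : ℝ) (hh : 0 < h) (hn : 0 < n)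
    (hκm : 0 < κm) (hκcm : |κcm| < κm) (hTcm : Tm < Tc)
    (hC : C = 1 - κcm / ((n+1)*κm) + κcm^2 / ((2*n+1)*κm^2) - κcm^3 / ((3*n+1)*κm^3)
        + κcm^4 / ((4*n+1)*κm^4) - κcm^5 / ((5*n+1)*κm^5))
    (η : ℝ → ℝ)
    (hη : ∀ z, η z = (1/C) * ((2*z+h)/(2*h)
        - (κcm / ((n+1)*κm)) * ((2*z+h)/(2*h)) ^ (n+1)
        + (κcm^2 / ((2*n+1)*κm^2)) * ((2*z+h)/(2*h)) ^ (2*n+1)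
        - (κcm^3 / ((3*n+1)*κm^3)) * ((2*z+h)/(2*h)) ^ (3*n+1)
        + (κcm^4 / ((4*n+1)*κm^4)) * ((2*z+h)/(2*h)) ^ (4*n+1)
        - (κcm^5 / ((5*n+1)*κm^5)) * ((2*z+h)/(2*h)) ^ (5*n+1)))
    (T : ℝ → ℝ) (hT : ∀ z, T z = Tm + (Tc - Tm) * η z) :
    StrictMonoOn T (Set.Icc (-h/2) (h/2)) ∧
    ∀ z ∈ Set.Icc (-h/2) (h/2), Tm ≤ T z ∧ T z ≤ Tc := by
  have hκm0 : κm ≠ 0 := ne_of_gt hκm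
  set a : ℝ := κcm / κm with ha
  have ha1 : |a| < 1 := by
    rw [ha, abs_div, abs_of_pos hκm]
    exact (div_lt_one hκm).2 hκcm
  have hd1 : (0:ℝ) < n + 1 := by linarith
  have hd2 : (0:ℝ) < 2*n + 1 := by linarith
  have hd3 : (0:ℝ) < 3*n + 1 := by linarith
  have hd4 : (0:ℝ) < 4*n + 1 := by linarith
  have hd5 : (0:ℝ) < 5*n + 1 := by linarith
  -- coefficient rewrites
  have hc1 : κcm / ((n+1)*κm) = a/(n+1) := by rw [ha, div_div, mul_comm]
  have hc2 : κcm^2 / ((2*n+1)*κm^2) = a^2/(2*n+1) := by rw [ha, div_pow, div_div, mul_comm]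
  have hc3 : κcm^3 / ((3*n+1)*κm^3) = a^3/(3*n+1) := by rw [ha, div_pow, div_div, mul_comm]
  have hc4 : κcm^4 / ((4*n+1)*κm^4) = a^4/(4*n+1) := by rw [ha, div_pow, div_div, mul_comm]
  have hc5 : κcm^5 / ((5*n+1)*κm^5) = a^5/(5*n+1) := by rw [ha, div_pow, div_div, mul_comm]
  set g : ℝ → ℝ := fun u => u - (a/(n+1)) * u^(n+1) + (a^2/(2*n+1)) * u^(2*n+1)
      - (a^3/(3*n+1)) * u^(3*n+1) + (a^4/(4*n+1)) * u^(4*n+1)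
      - (a^5/(5*n+1)) * u^(5*n+1) with hg
  -- continuity
  have hp : ∀ p : ℝ, 0 < p → Continuous (fun u : ℝ => u ^ p) := by
    intro p hp
    apply continuous_iff_continuousAt.2
    intro x
    exact Real.continuousAt_rpow_const x p (Or.inr hp.le)
  have hcont : Continuous g := by
    rw [hg]
    exact ((((continuous_id.sub (continuous_const.mul (hp _ hd1))).add
      (continuous_const.mul (hp _ hd2))).sub (continuous_const.mul (hp _ hd3))).add
      (continuous_const.mul (hp _ hd4))).sub (continuous_const.mul (hp _ hd5))
  -- derivative on (0,1)
  have hderiv : ∀ x ∈ Set.Ioo (0:ℝ) 1, HasDerivAt g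
      (1 - a*x^n + a^2*x^(2*n) - a^3*x^(3*n) + a^4*x^(4*n) - a^5*x^(5*n)) x := by
    intro x hx
    have hx0 : x ≠ 0 := ne_of_gt hx.1
    have H : ∀ p : ℝ, HasDerivAt (fun u : ℝ => u ^ p) (p * x ^ (p-1)) x :=
      fun p => Real.hasDerivAt_rpow_const (Or.inl hx0)
    have key := ((((((hasDerivAt_id x).sub ((H (n+1)).const_mul (a/(n+1)))).add
      ((H (2*n+1)).const_mul (a^2/(2*n+1)))).sub ((H (3*n+1)).const_mul (a^3/(3*n+1)))).add
      ((H (4*n+1)).const_mul (a^4/(4*n+1)))).sub ((H (5*n+1)).const_mul (a^5/(5*n+1))))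
    convert key using 1
    · rfl
    · rfl
    · rfl
    rw [show n+1-1 = n by ring, show 2*n+1-1 = 2*n by ring, show 3*n+1-1 = 3*n by ring,
        show 4*n+1-1 = 4*n by ring, show 5*n+1-1 = 5*n by ring]
    field_simp
  have hpos : ∀ x ∈ Set.Ioo (0:ℝ) 1,
      0 < 1 - a*x^n + a^2*x^(2*n) - a^3*x^(3*n) + a^4*x^(4*n) - a^5*x^(5*n) := by
    intro x hx
    have hxn : 0 < x^n := Real.rpow_pos_of_pos hx.1 n
    have hxn1 : x^n ≤ 1 := Real.rpow_le_one hx.1.le hx.2.le hn.le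
    have hab : |a * x^n| < 1 := by
      rw [abs_mul, abs_of_pos hxn]
      calc |a| * x^n ≤ |a| * 1 := mul_le_mul_of_nonneg_left hxn1 (abs_nonneg a)
        _ < 1 := by rw [mul_one]; exact ha1
    obtain ⟨hs1, hs2⟩ := abs_lt.1 hab
    have hrw : ∀ k : ℕ, x^((k:ℝ)*n) = (x^n)^k := by
      intro k
      rw [show (k:ℝ)*n = n*(k:ℝ) by ring, Real.rpow_mul hx.1.le, Real.rpow_natCast]
    have h2 := hrw 2; have h3 := hrw 3; have h4 := hrw 4; have h5 := hrw 5
    push_cast at h2 h3 h4 h5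
    rw [h2, h3, h4, h5]
    have hfac : 0 < (1 - a*x^n) * (1 + (a*x^n)^2 + (a*x^n)^4) :=
      mul_pos (by linarith) (by positivity)
    nlinarith [hfac]
  have hgmono : StrictMonoOn g (Set.Icc (0:ℝ) 1) := by
    apply strictMonoOn_of_deriv_pos (convex_Icc 0 1) hcont.continuousOn
    intro x hx
    rw [interior_Icc] at hx
    rw [(hderiv x hx).deriv]
    exact hpos x hx
  have hg0 : g 0 = 0 := by
    rw [hg]
    simp [Real.zero_rpow (ne_of_gt hd1), Real.zero_rpow (ne_of_gt hd2),
      Real.zero_rpow (ne_of_gt hd3), Real.zero_rpow (ne_of_gt hd4),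
      Real.zero_rpow (ne_of_gt hd5)]
  have hg1 : g 1 = C := by
    rw [hg]
    simp only [Real.one_rpow, mul_one]
    rw [hC, hc1, hc2, hc3, hc4, hc5]
  have hC0 : 0 < C := by
    rw [← hg1]
    have := hgmono (Set.left_mem_Icc.2 zero_le_one) (Set.right_mem_Icc.2 zero_le_one) zero_lt_one
    rwa [hg0] at this
  set u : ℝ → ℝ := fun z => (2*z+h)/(2*h) with hu
  have humem : ∀ z ∈ Set.Icc (-h/2) (h/2), u z ∈ Set.Icc (0:ℝ) 1 := by
    intro z hz
    obtain ⟨hz1, hz2⟩ := hz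
    constructor
    · exact div_nonneg (by linarith) (by linarith)
    · rw [div_le_one (by linarith)]; linarith
  have humono : ∀ z1 z2 : ℝ, z1 < z2 → u z1 < u z2 := by
    intro z1 z2 hz
    rw [hu]
    simp only
    rw [div_lt_div_iff_of_pos_right (by linarith : (0:ℝ) < 2*h)]
    linarith
  have hTz : ∀ z, T z = Tm + ((Tc-Tm)/C) * g (u z) := by
    intro z
    rw [hT z, hη z]
    simp only [hc1, hc2, hc3, hc4, hc5, hg, hu]
    ring
  have key : StrictMonoOn T (Set.Icc (-h/2) (h/2)) := by
    intro z1 hz1 z2 hz2 hz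
    rw [hTz z1, hTz z2]
    have hg' := hgmono (humem z1 hz1) (humem z2 hz2) (humono z1 z2 hz)
    have hk : 0 < (Tc-Tm)/C := div_pos (by linarith) hC0
    have hlt := mul_lt_mul_of_pos_left hg' hk
    linarith
  refine ⟨key, ?_⟩
  intro z hz
  have h1 := hgmono.monotoneOn (Set.left_mem_Icc.2 zero_le_one) (humem z hz) (humem z hz).1
  have h2 := hgmono.monotoneOn (humem z hz) (Set.right_mem_Icc.2 zero_le_one) (humem z hz).2
  rw [hg0] at h1
  rw [hg1] at h2
  rw [hTz z]
  have hk : 0 ≤ (Tc-Tm)/C := le_of_lt (div_pos (by linarith) hC0)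
  constructor
  · have := mul_nonneg hk h1
    linarith
  · have hle := mul_le_mul_of_nonneg_left h2 hk
    have hcc : (Tc-Tm)/C * C = Tc - Tm := div_mul_cancel₀ _ (ne_of_gt hC0)
    rw [hcc] at hle
    linarith
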